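/- Suppose a game satisfies (δ, μ)-smoothness: for all pure action profiles a, a_⋆ ∈ A and every state z ∈ Z, ∑_{j} ⟨z, φ_j(a^j_⋆, a^{-j})⟩ ≤ ∑_j [δ ⟨z, φ_j(a_⋆)⟩ + μ ⟨z, φ_j(a)⟩] with 0 < μ < 1. Let C_t(w_t) = ∑_j c^j(w_t, Z_t) be the social cost at time t, let C^⋆ = min over pure policies ρ : Z → A of T^{-1} ∑_t ∑_j c^j(ρ(Z_t), Z_t), and let R^j_T be the contextual external regret of agent j. Then T^{-1} ∑_{t=1}^T C_t(w_t) ≤ γ C^⋆ + (1-μ)^{-1} T^{-1} ∑_j R^j_T, where γ = δ(1-μ)^{-1}. -/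

import Mathlib

open Finset

lemma key_delta {ι : Type*} [Fintype ι] [DecidableEq ι] (A : ι → Type*) [∀ i, Fintype (A i)]
    [∀ i, DecidableEq (A i)] (j : ι) (W : ∀ i, A i → ℝ) (hWj : ∑ c, W j c = 1) (b : A j)
    (f : (∀ i, A i) → ℝ) :
    ∑ a, (∏ i, (Function.update W j (fun c => if c = b then (1:ℝ) else 0)) i (a i)) * f a
      = ∑ a, (∏ i, W i (a i)) * f (Function.update a j b) := by
  set S : ℝ := ∑ a ∈ univ.filter (fun a : ∀ i, A i => a j = b),
      (∏ i ∈ univ.erase j, W i (a i)) * f a with hS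
  have prodsplit : ∀ (V : ∀ i, A i → ℝ) (a : ∀ i, A i),
      ∏ i, V i (a i) = V j (a j) * ∏ i ∈ univ.erase j, V i (a i) := by
    intro V a
    rw [← Finset.mul_prod_erase univ (fun i => V i (a i)) (mem_univ j)]
  have hL : ∑ a, (∏ i, (Function.update W j (fun c => if c = b then (1:ℝ) else 0)) i (a i)) * f a = S := by
    rw [hS, ← Finset.sum_filter_add_sum_filter_not univ (fun a : ∀ i, A i => a j = b)]
    have h2 : ∑ a ∈ univ.filter (fun a : ∀ i, A i => ¬ a j = b),
        (∏ i, (Function.update W j (fun c => if c = b then (1:ℝ) else 0)) i (a i)) * f a = 0 := by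
      apply Finset.sum_eq_zero
      intro a ha
      simp only [mem_filter] at ha
      rw [prodsplit]
      simp [Function.update_self, ha.2]
    rw [h2, add_zero]
    apply Finset.sum_congr rfl
    intro a ha
    simp only [mem_filter] at ha
    rw [prodsplit]
    have : ∀ i ∈ univ.erase j, (Function.update W j (fun c => if c = b then (1:ℝ) else 0)) i (a i) = W i (a i) := by
      intro i hi
      rw [Function.update_of_ne (Finset.mem_erase.mp hi).1]
    rw [Finset.prod_congr rfl this]
    simp [Function.update_self, ha.2]
  have hR : ∑ a, (∏ i, W i (a i)) * f (Function.update a j b) = S := by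
    have fib : ∀ c : A j,
        ∑ a ∈ univ.filter (fun a : ∀ i, A i => a j = c),
          (∏ i ∈ univ.erase j, W i (a i)) * f (Function.update a j b) = S := by
      intro c
      rw [hS]
      apply Finset.sum_nbij' (i := fun a => Function.update a j b)
        (j := fun a => Function.update a j c)
      · intro a ha; simp only [mem_filter, mem_univ, true_and] at *; simp
      · intro a ha; simp only [mem_filter, mem_univ, true_and] at *; simp
      · intro a ha; simp only [mem_filter, mem_univ, true_and] at ha
        ext i
        by_cases hij : i = j
        · subst hij; simp [ha]
        · simp [Function.update_of_ne hij]
      · intro a ha; simp only [mem_filter, mem_univ, true_and] at ha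
        ext i
        by_cases hij : i = j
        · subst hij; simp [ha]
        · simp [Function.update_of_ne hij]
      · intro a ha
        congr 1
        apply Finset.prod_congr rfl
        intro i hi
        rw [Function.update_of_ne (Finset.mem_erase.mp hi).1]
    calc ∑ a, (∏ i, W i (a i)) * f (Function.update a j b)
        = ∑ c : A j, ∑ a ∈ univ.filter (fun a : ∀ i, A i => a j = c),
            (∏ i, W i (a i)) * f (Function.update a j b) := by
          rw [Finset.sum_fiberwise_of_maps_to (fun a _ => mem_univ (a j))]
      _ = ∑ c : A j, W j c * S := by
          apply Finset.sum_congr rfl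
          intro c _
          rw [← fib c, Finset.mul_sum]
          apply Finset.sum_congr rfl
          intro a ha
          simp only [mem_filter] at ha
          rw [prodsplit, ha.2, mul_assoc]
      _ = S := by rw [← Finset.sum_mul, hWj, one_mul]
  rw [hL, hR]

/-- under (δ,μ)-smoothness, average social cost is bounded by
`γ C⋆ + (1-μ)⁻¹ T⁻¹ ∑_j R^j_T` with `γ = δ/(1-μ)`. -/
theorem stmt1
    (J : Type*) [Fintype J] [DecidableEq J]
    (A : J → Type*) [∀ j, Fintype (A j)] [∀ j, DecidableEq (A j)] [∀ j, Nonempty (A j)]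
    (Z : Type*) [DecidableEq Z]
    (T : ℕ) (hT : 0 < T) (Zt : Fin T → Z)
    -- u j a z is the scalar cost ⟨z, φ_j(a)⟩
    (u : (j : J) → ((i : J) → A i) → Z → ℝ)
    (δ μ : ℝ) (hδ : 0 < δ) (hμ0 : 0 < μ) (hμ1 : μ < 1)
    (hsmooth : ∀ a astar : (i : J) → A i, ∀ z : Z,
      ∑ j, u j (Function.update a j (astar j)) z ≤
        ∑ j, (δ * u j astar z + μ * u j a z))
    -- mixed strategies at each round
    (w : Fin T → (j : J) → A j → ℝ)
    (hw : ∀ t j, (∀ b, 0 ≤ w t j b) ∧ ∑ b, w t j b = 1)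
    -- cost of player j at time t when j plays p and the others play w t
    (cdev : (j : J) → (A j → ℝ) → Fin T → ℝ)
    (hcdev : ∀ j p t, cdev j p t =
      ∑ a : (i : J) → A i, (∏ i, (Function.update (w t) j p) i (a i)) * u j a (Zt t))
    -- the per-context optimal comparator
    (πs : (j : J) → Z → A j → ℝ)
    (hπsdist : ∀ j z, (∀ b, 0 ≤ πs j z b) ∧ ∑ b, πs j z b = 1)
    (hπsopt : ∀ j z (p : A j → ℝ), (∀ b, 0 ≤ p b) → ∑ b, p b = 1 →
      ∑ t ∈ univ.filter (fun t => Zt t = z), cdev j (πs j z) t ≤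
        ∑ t ∈ univ.filter (fun t => Zt t = z), cdev j p t)
    -- contextual external regrets
    (R : J → ℝ)
    (hR : ∀ j, R j = ∑ t, (cdev j (w t j) t - cdev j (πs j (Zt t)) t))
    -- optimal average social cost in pure strategy
    (ρstar : Z → (i : J) → A i) (Cstar : ℝ)
    (hCstar : Cstar = (T : ℝ)⁻¹ * ∑ t, ∑ j, u j (ρstar (Zt t)) (Zt t))
    (hCstarmin : ∀ ρ : Z → (i : J) → A i,
      Cstar ≤ (T : ℝ)⁻¹ * ∑ t, ∑ j, u j (ρ (Zt t)) (Zt t)) :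
    (T : ℝ)⁻¹ * ∑ t, ∑ j, cdev j (w t j) t
      ≤ (δ / (1 - μ)) * Cstar + (1 - μ)⁻¹ * ((T : ℝ)⁻¹ * ∑ j, R j) := by
  have hTr : (0:ℝ) < (T:ℝ) := by exact_mod_cast hT
  have h1μ : (0:ℝ) < 1 - μ := by linarith
  -- value of cdev at the actual mixed strategy
  have cdevw : ∀ t j, cdev j (w t j) t = ∑ a, (∏ i, w t i (a i)) * u j a (Zt t) := by
    intro t j
    rw [hcdev]
    simp [Function.update_eq_self]
  -- value of cdev at the point mass on ρstar
  have cdevdelta : ∀ t j, cdev j (fun c => if c = ρstar (Zt t) j then (1:ℝ) else 0) t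
      = ∑ a, (∏ i, w t i (a i)) * u j (Function.update a j (ρstar (Zt t) j)) (Zt t) := by
    intro t j
    rw [hcdev]
    exact key_delta A j (w t) (hw t j).2 (ρstar (Zt t) j) (fun a => u j a (Zt t))
  -- smoothness at each round
  have hsm : ∀ t, ∑ j, cdev j (fun c => if c = ρstar (Zt t) j then (1:ℝ) else 0) t
      ≤ δ * ∑ j, u j (ρstar (Zt t)) (Zt t) + μ * ∑ j, cdev j (w t j) t := by
    intro t
    have hp : ∀ a : (i : J) → A i, 0 ≤ ∏ i, w t i (a i) :=
      fun a => Finset.prod_nonneg fun i _ => (hw t i).1 (a i)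
    have hone : ∑ a : (i : J) → A i, ∏ i, w t i (a i) = 1 := by
      rw [← Fintype.piFinset_univ, ← Finset.prod_univ_sum]
      exact Finset.prod_eq_one fun i _ => (hw t i).2
    calc ∑ j, cdev j (fun c => if c = ρstar (Zt t) j then (1:ℝ) else 0) t
        = ∑ a, (∏ i, w t i (a i)) * ∑ j, u j (Function.update a j (ρstar (Zt t) j)) (Zt t) := by
          simp_rw [cdevdelta, Finset.mul_sum]
          rw [Finset.sum_comm]
      _ ≤ ∑ a, (∏ i, w t i (a i)) *
            ∑ j, (δ * u j (ρstar (Zt t)) (Zt t) + μ * u j a (Zt t)) :=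
          Finset.sum_le_sum fun a _ =>
            mul_le_mul_of_nonneg_left (hsmooth a (ρstar (Zt t)) (Zt t)) (hp a)
      _ = δ * ∑ j, u j (ρstar (Zt t)) (Zt t) + μ * ∑ j, cdev j (w t j) t := by
          have e1 : ∀ a : (i : J) → A i,
              (∏ i, w t i (a i)) * ∑ j, (δ * u j (ρstar (Zt t)) (Zt t) + μ * u j a (Zt t))
              = δ * (∏ i, w t i (a i)) * ∑ j, u j (ρstar (Zt t)) (Zt t)
                + μ * ((∏ i, w t i (a i)) * ∑ j, u j a (Zt t)) := by
            intro a
            rw [Finset.sum_add_distrib, ← Finset.mul_sum, ← Finset.mul_sum]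
            ring
          rw [Finset.sum_congr rfl (fun a _ => e1 a), Finset.sum_add_distrib]
          congr 1
          · rw [← Finset.sum_mul, ← Finset.mul_sum, hone, mul_one]
          · rw [← Finset.mul_sum]
            congr 1
            simp_rw [Finset.mul_sum]
            rw [Finset.sum_comm]
            exact Finset.sum_congr rfl fun j _ => (cdevw t j).symm
  -- optimality of the comparator against the point-mass deviation
  have hopt : ∀ j, ∑ t, cdev j (πs j (Zt t)) t
      ≤ ∑ t, cdev j (fun c => if c = ρstar (Zt t) j then (1:ℝ) else 0) t := by
    intro j
    rw [← Finset.sum_fiberwise_of_maps_to (g := Zt) (t := univ.image Zt)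
      (fun t _ => mem_image_of_mem _ (mem_univ t)) (fun t => cdev j (πs j (Zt t)) t),
      ← Finset.sum_fiberwise_of_maps_to (g := Zt) (t := univ.image Zt)
      (fun t _ => mem_image_of_mem _ (mem_univ t))
      (fun t => cdev j (fun c => if c = ρstar (Zt t) j then (1:ℝ) else 0) t)]
    apply Finset.sum_le_sum
    intro z _
    have e1 : ∑ t ∈ univ.filter (fun t => Zt t = z), cdev j (πs j (Zt t)) t
        = ∑ t ∈ univ.filter (fun t => Zt t = z), cdev j (πs j z) t := by
      apply Finset.sum_congr rfl
      intro t ht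
      rw [(mem_filter.mp ht).2]
    have e2 : ∑ t ∈ univ.filter (fun t => Zt t = z),
          cdev j (fun c => if c = ρstar (Zt t) j then (1:ℝ) else 0) t
        = ∑ t ∈ univ.filter (fun t => Zt t = z),
          cdev j (fun c => if c = ρstar z j then (1:ℝ) else 0) t := by
      apply Finset.sum_congr rfl
      intro t ht
      rw [(mem_filter.mp ht).2]
    rw [e1, e2]
    apply hπsopt j z
    · intro b; split <;> norm_num
    · simp
  -- put everything together
  set S : ℝ := ∑ t, ∑ j, cdev j (w t j) t with hSdef
  set O : ℝ := ∑ t, ∑ j, u j (ρstar (Zt t)) (Zt t) with hOdef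
  set RR : ℝ := ∑ j, R j with hRRdef
  have hRReq : RR = S - ∑ j, ∑ t, cdev j (πs j (Zt t)) t := by
    rw [hRRdef, hSdef]
    rw [Finset.sum_comm (s := univ) (t := univ) (f := fun t j => cdev j (w t j) t)]
    rw [← Finset.sum_sub_distrib]
    apply Finset.sum_congr rfl
    intro j _
    rw [hR j, Finset.sum_sub_distrib]
  have hP : ∑ j, ∑ t, cdev j (πs j (Zt t)) t ≤ δ * O + μ * S := by
    calc ∑ j, ∑ t, cdev j (πs j (Zt t)) t
        ≤ ∑ j, ∑ t, cdev j (fun c => if c = ρstar (Zt t) j then (1:ℝ) else 0) t :=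
          Finset.sum_le_sum fun j _ => hopt j
      _ = ∑ t, ∑ j, cdev j (fun c => if c = ρstar (Zt t) j then (1:ℝ) else 0) t :=
          Finset.sum_comm
      _ ≤ ∑ t, (δ * ∑ j, u j (ρstar (Zt t)) (Zt t) + μ * ∑ j, cdev j (w t j) t) :=
          Finset.sum_le_sum fun t _ => hsm t
      _ = δ * O + μ * S := by
          rw [Finset.sum_add_distrib, hOdef, hSdef, Finset.mul_sum, Finset.mul_sum]
  have hKey : (1 - μ) * S ≤ δ * O + RR := by
    have := hP
    rw [hRReq]
    linarith
  have hOC : O = (T : ℝ) * Cstar := by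
    rw [hCstar, hOdef]
    field_simp
  rw [hOC] at hKey
  rw [div_eq_mul_inv]
  have hfin : S ≤ (T:ℝ) * (δ * (1 - μ)⁻¹ * Cstar + (1 - μ)⁻¹ * ((T : ℝ)⁻¹ * RR)) := by
    have hinvT : (T:ℝ) * (T:ℝ)⁻¹ = 1 := mul_inv_cancel₀ (ne_of_gt hTr)
    have hinvμ : (1 - μ) * (1 - μ)⁻¹ = 1 := mul_inv_cancel₀ (ne_of_gt h1μ)
    have h2 : S ≤ (1 - μ)⁻¹ * (δ * ((T:ℝ) * Cstar) + RR) := by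
      rw [le_inv_mul_iff₀ h1μ] at *
      linarith [hKey]
    calc S ≤ (1 - μ)⁻¹ * (δ * ((T:ℝ) * Cstar) + RR) := h2
      _ = (T:ℝ) * (δ * (1 - μ)⁻¹ * Cstar + (1 - μ)⁻¹ * ((T : ℝ)⁻¹ * RR)) := by
          field_simp
  calc (T : ℝ)⁻¹ * S ≤ (T : ℝ)⁻¹ * ((T:ℝ) * (δ * (1 - μ)⁻¹ * Cstar + (1 - μ)⁻¹ * ((T : ℝ)⁻¹ * RR))) :=
        mul_le_mul_of_nonneg_left hfin (le_of_lt (inv_pos.mpr hTr))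
    _ = δ * (1 - μ)⁻¹ * Cstar + (1 - μ)⁻¹ * ((T : ℝ)⁻¹ * RR) := by
        rw [← mul_assoc, inv_mul_cancel₀ (ne_of_gt hTr), one_mul]
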